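/- Fix λ ∈ ℂ \ {0}, α ∈ ℂ, ρ ∈ ℝ, and set Δ(z,ζ,w) = 1 + 2iαz − α²z² − (α²ζ − αᾱ + iρ)w. Define z' = λ·(z + iαz² + (iαζ − iᾱ)w)/Δ, ζ' = (λ/λ̄)·(ζ + 2iᾱz − (αᾱ + iρ)z² + (ᾱ² − iρζ − αᾱζ)w)/Δ, w' = λλ̄·w/Δ. This map fixes the origin of ℂ³, and for every (z,ζ,w) ∈ ℂ³ with |ζ| < 1, Δ(z,ζ,w) ≠ 0, |ζ'| < 1, and Re w = m(z,ζ), one has Re w' = m(z',ζ'). That is, the 5-real-parameter family of maps preserves the Gaussier–Merker hypersurface {Re w = m(z,ζ)} where defined. -/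

import Mathlib

open ComplexConjugate

/-- The Gaussier–Merker graphing function `m(z,ζ)`, `ℂ`-valued
(it is real-valued on `{|ζ| < 1}`). -/
noncomputable def GMm (z ζ : ℂ) : ℂ :=
  (z * conj z + (1 / 2 : ℂ) * (conj z) ^ 2 * ζ + (1 / 2 : ℂ) * z ^ 2 * conj ζ) /
    (1 - ζ * conj ζ)

/-- The common denominator `Δ = 1 + 2iαz − α²z² − (α²ζ − αᾱ + iρ)w`. -/
noncomputable def Δ (α : ℂ) (ρ : ℝ) (z ζ w : ℂ) : ℂ :=
  1 + 2 * Complex.I * α * z - α ^ 2 * z ^ 2 - (α ^ 2 * ζ - α * conj α + Complex.I * ρ) * w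

/-- `z' = λ·(z + iαz² + (iαζ − iᾱ)w)/Δ`. -/
noncomputable def mapZ (lam α : ℂ) (ρ : ℝ) (z ζ w : ℂ) : ℂ :=
  lam * (z + Complex.I * α * z ^ 2 + (Complex.I * α * ζ - Complex.I * conj α) * w) / Δ α ρ z ζ w

/-- `ζ' = (λ/λ̄)·(ζ + 2iᾱz − (αᾱ + iρ)z² + (ᾱ² − iρζ − αᾱζ)w)/Δ`. -/
noncomputable def mapZeta (lam α : ℂ) (ρ : ℝ) (z ζ w : ℂ) : ℂ :=
  (lam / conj lam) *
      (ζ + 2 * Complex.I * conj α * z - (α * conj α + Complex.I * ρ) * z ^ 2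
        + ((conj α) ^ 2 - Complex.I * ρ * ζ - α * conj α * ζ) * w) / Δ α ρ z ζ w

/-- `w' = λλ̄·w/Δ`. -/
noncomputable def mapW (lam α : ℂ) (ρ : ℝ) (z ζ w : ℂ) : ℂ :=
  lam * conj lam * w / Δ α ρ z ζ w


set_option maxRecDepth 100000 in
set_option maxHeartbeats 4000000 in
lemma GM_key (z zb t tb w wb a ab r i : ℂ) (hI : i^2 = -1)
    (hC : (w + wb) * (1 - t * tb) = 2 * (z * zb) + zb ^ 2 * t + z ^ 2 * tb) :
    (w * (1 - 2*i*ab*zb - ab^2*zb^2 - (ab^2*tb - a*ab - i*r)*wb)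
      + wb * (1 + 2*i*a*z - a^2*z^2 - (a^2*t - a*ab + i*r)*w))
    * ((1 + 2*i*a*z - a^2*z^2 - (a^2*t - a*ab + i*r)*w)
        * (1 - 2*i*ab*zb - ab^2*zb^2 - (ab^2*tb - a*ab - i*r)*wb)
      - (t + 2*i*ab*z - (a*ab + i*r)*z^2 + (ab^2 - i*r*t - a*ab*t)*w)
        * (tb - 2*i*a*zb - (a*ab - i*r)*zb^2 + (a^2 + i*r*tb - a*ab*tb)*wb))
    = 2 * ((1 + 2*i*a*z - a^2*z^2 - (a^2*t - a*ab + i*r)*w)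
            * (1 - 2*i*ab*zb - ab^2*zb^2 - (ab^2*tb - a*ab - i*r)*wb)
            * (z + i*a*z^2 + (i*a*t - i*ab)*w)
            * (zb - i*ab*zb^2 + (-(i*ab*tb) + i*a)*wb)
        + (1/2) * (1 + 2*i*a*z - a^2*z^2 - (a^2*t - a*ab + i*r)*w)
            * (zb - i*ab*zb^2 + (-(i*ab*tb) + i*a)*wb)^2
            * (t + 2*i*ab*z - (a*ab + i*r)*z^2 + (ab^2 - i*r*t - a*ab*t)*w)
        + (1/2) * (1 - 2*i*ab*zb - ab^2*zb^2 - (ab^2*tb - a*ab - i*r)*wb)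
            * (z + i*a*z^2 + (i*a*t - i*ab)*w)^2
            * (tb - 2*i*a*zb - (a*ab - i*r)*zb^2 + (a^2 + i*r*tb - a*ab*tb)*wb)) := by
  linear_combination ((1 + 2*i*a*z - a^2*z^2 - (a^2*t - a*ab + i*r)*w)
    * (1 - 2*i*ab*zb - ab^2*zb^2 - (ab^2*tb - a*ab - i*r)*wb)) * hC
    + ((2)*w*wb*a*ab + (2)*w*wb^2*a*ab*r*i + (1)*w*wb^2*a^2*ab^2 + (-2)*w^2*wb*a*ab*r*i + (1)*w^2*wb*a^2*ab^2 + (-2)*w^2*wb^2*a*ab*r^2*i^2 + (-2)*tb*w*wb*ab^2 + (-2)*tb*w*wb^2*ab^2*r*i + (-2)*tb*w*wb^2*a*ab^3 + (-1)*tb*w^2*ab^2 + (-2)*tb*w^2*wb*a*ab^3 + (1)*tb*w^2*wb^2*ab^2*r^2*i^2 + (1)*tb^2*w*wb^2*ab^4 + (1)*tb^2*w^2*wb*ab^4 + (-1)*t*wb^2*a^2 + (-2)*t*w*wb*a^2 + (-2)*t*w*wb^2*a^3*ab + (2)*t*w^2*wb*a^2*r*i + (-2)*t*w^2*wb*a^3*ab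 + (1)*t*w^2*wb^2*a^2*r^2*i^2 + (2)*t*tb*wb^2*a*ab + (2)*t*tb*w*wb*a*ab + (-2)*t*tb*w*wb^2*a*ab*r*i + (4)*t*tb*w*wb^2*a^2*ab^2 + (2)*t*tb*w^2*a*ab + (2)*t*tb*w^2*wb*a*ab*r*i + (4)*t*tb*w^2*wb*a^2*ab^2 + (2)*t*tb*w^2*wb^2*a*ab*r^2*i^2 + (-1)*t*tb^2*wb^2*ab^2 + (2)*t*tb^2*w*wb^2*ab^2*r*i + (-2)*t*tb^2*w*wb^2*a*ab^3 + (-2)*t*tb^2*w^2*wb*a*ab^3 + (-1)*t*tb^2*w^2*wb^2*ab^2*r^2*i^2 + (1)*t^2*w*wb^2*a^4 + (1)*t^2*w^2*wb*a^4 + (-2)*t^2*tb*w*wb^2*a^3*ab + (-1)*t^2*tb*w^2*a^2 + (-2)*t^2*tb*w^2*wb*a^2*r*i + (-2)*t^2*tb*w^2*wb*a^3*ab + (-1)*t^2*tb*w^2*wb^2*a^2*r^2*i^2 + (1)*t^2*tb^2*w*wb^2*a^2*ab^2 + (1)*t^2*tb^2*w^2*wb*a^2*ab^2 + (-4)*zb*w*wb*a*ab^2*i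 + (2)*zb*w^2*a*ab^2*i + (6)*zb*w^2*wb*a*ab^2*r*i^2 + (4)*zb*tb*w*wb*ab^3*i + (2)*zb*tb*w^2*ab^3*i + (-2)*zb*tb*w^2*wb*ab^3*r*i^2 + (4)*zb*t*w*wb*a^2*ab*i + (-4)*zb*t*w^2*a^2*ab*i + (-8)*zb*t*w^2*wb*a^2*ab*r*i^2 + (-4)*zb*t*tb*w*wb*a*ab^2*i + (-4)*zb*t*tb*w^2*a*ab^2*i + (2)*zb*t^2*w^2*a^3*i + (2)*zb*t^2*w^2*wb*a^3*r*i^2 + (2)*zb*t^2*tb*w^2*a^2*ab*i + (2)*zb*t^2*tb*w^2*wb*a^2*ab*r*i^2 + (-2)*zb^2*w*ab^2 + (-2)*zb^2*w*wb*ab^2*r*i + (-2)*zb^2*w*wb*a*ab^3 + (1)*zb^2*w^2*ab^2*r*i + (-1)*zb^2*w^2*a*ab^3 + (-4)*zb^2*w^2*a*ab^3*i^2 + (1)*zb^2*w^2*wb*ab^2*r^2*i^2 + (2)*zb^2*tb*w*wb*ab^4 + (1)*zb^2*tb*w^2*ab^4 + (2)*zb^2*t*wb*a*ab + (2)*zb^2*t*w*a*ab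 + (-2)*zb^2*t*w*wb*a*ab*r*i + (4)*zb^2*t*w*wb*a^2*ab^2 + (2)*zb^2*t*w^2*a^2*ab^2 + (8)*zb^2*t*w^2*a^2*ab^2*i^2 + (2)*zb^2*t*w^2*wb*a*ab*r^2*i^2 + (-2)*zb^2*t*tb*wb*ab^2 + (4)*zb^2*t*tb*w*wb*ab^2*r*i + (-4)*zb^2*t*tb*w*wb*a*ab^3 + (-2)*zb^2*t*tb*w^2*a*ab^3 + (-2)*zb^2*t*tb*w^2*wb*ab^2*r^2*i^2 + (-2)*zb^2*t^2*w*wb*a^3*ab + (-1)*zb^2*t^2*w^2*a^2*r*i + (-1)*zb^2*t^2*w^2*a^3*ab + (-4)*zb^2*t^2*w^2*a^3*ab*i^2 + (-1)*zb^2*t^2*w^2*wb*a^2*r^2*i^2 + (2)*zb^2*t^2*tb*w*wb*a^2*ab^2 + (1)*zb^2*t^2*tb*w^2*a^2*ab^2 + (4)*zb^3*w*ab^3*i + (-2)*zb^3*w^2*ab^3*r*i^2 + (-4)*zb^3*t*w*a*ab^2*i + (2)*zb^3*t^2*w^2*a^2*ab*r*i^2 + (1)*zb^4*w*ab^4 +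 (-1)*zb^4*t*ab^2 + (2)*zb^4*t*w*ab^2*r*i + (-2)*zb^4*t*w*a*ab^3 + (-1)*zb^4*t*w^2*ab^2*r^2*i^2 + (1)*zb^4*t^2*w*a^2*ab^2 + (-2)*z*wb^2*a^2*ab*i + (4)*z*w*wb*a^2*ab*i + (6)*z*w*wb^2*a^2*ab*r*i^2 + (4)*z*tb*wb^2*a*ab^2*i + (-4)*z*tb*w*wb*a*ab^2*i + (-8)*z*tb*w*wb^2*a*ab^2*r*i^2 + (-2)*z*tb^2*wb^2*ab^3*i + (2)*z*tb^2*w*wb^2*ab^3*r*i^2 + (-2)*z*t*wb^2*a^3*i + (-4)*z*t*w*wb*a^3*i + (-2)*z*t*w*wb^2*a^3*r*i^2 + (4)*z*t*tb*wb^2*a^2*ab*i + (4)*z*t*tb*w*wb*a^2*ab*i + (-2)*z*t*tb^2*wb^2*a*ab^2*i + (2)*z*t*tb^2*w*wb^2*a*ab^2*r*i^2 + (-8)*z*zb*w*wb*a^2*ab^2*i^2 + (8)*z*zb*tb*w*wb*a*ab^3*i^2 + (8)*z*zb*t*w*wb*a^3*ab*i^2 + (-8)*z*zb*t*tb*w*wb*a^2*ab^2*i^2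 + (4)*z*zb^2*wb*a*ab^2*i + (-4)*z*zb^2*w*a*ab^2*i + (-8)*z*zb^2*w*wb*a*ab^2*r*i^2 + (-4)*z*zb^2*tb*wb*ab^3*i + (4)*z*zb^2*tb*w*wb*ab^3*r*i^2 + (4)*z*zb^2*t*wb*a^2*ab*i + (4)*z*zb^2*t*w*a^2*ab*i + (-4)*z*zb^2*t*tb*wb*a*ab^2*i + (4)*z*zb^2*t*tb*w*wb*a*ab^2*r*i^2 + (8)*z*zb^3*w*a*ab^3*i^2 + (-8)*z*zb^3*t*w*a^2*ab^2*i^2 + (-2)*z*zb^4*ab^3*i + (2)*z*zb^4*w*ab^3*r*i^2 + (-2)*z*zb^4*t*a*ab^2*i + (2)*z*zb^4*t*w*a*ab^2*r*i^2 + (-2)*z^2*wb*a^2 + (-1)*z^2*wb^2*a^2*r*i + (-1)*z^2*wb^2*a^3*ab + (-4)*z^2*wb^2*a^3*ab*i^2 + (2)*z^2*w*wb*a^2*r*i + (-2)*z^2*w*wb*a^3*ab + (1)*z^2*w*wb^2*a^2*r^2*i^2 + (2)*z^2*tb*wb*a*ab + (2)*z^2*tb*wb^2*a^2*ab^2 +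 (8)*z^2*tb*wb^2*a^2*ab^2*i^2 + (2)*z^2*tb*w*a*ab + (2)*z^2*tb*w*wb*a*ab*r*i + (4)*z^2*tb*w*wb*a^2*ab^2 + (2)*z^2*tb*w*wb^2*a*ab*r^2*i^2 + (1)*z^2*tb^2*wb^2*ab^2*r*i + (-1)*z^2*tb^2*wb^2*a*ab^3 + (-4)*z^2*tb^2*wb^2*a*ab^3*i^2 + (-2)*z^2*tb^2*w*wb*a*ab^3 + (-1)*z^2*tb^2*w*wb^2*ab^2*r^2*i^2 + (1)*z^2*t*wb^2*a^4 + (2)*z^2*t*w*wb*a^4 + (-2)*z^2*t*tb*wb^2*a^3*ab + (-2)*z^2*t*tb*w*a^2 + (-4)*z^2*t*tb*w*wb*a^2*r*i + (-4)*z^2*t*tb*w*wb*a^3*ab + (-2)*z^2*t*tb*w*wb^2*a^2*r^2*i^2 + (1)*z^2*t*tb^2*wb^2*a^2*ab^2 + (2)*z^2*t*tb^2*w*wb*a^2*ab^2 + (4)*z^2*zb*wb*a^2*ab*i + (-4)*z^2*zb*w*a^2*ab*i + (-8)*z^2*zb*w*wb*a^2*ab*r*i^2 + (-4)*z^2*zb*tb*wb*a*ab^2*i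 + (-4)*z^2*zb*tb*w*a*ab^2*i + (4)*z^2*zb*t*w*a^3*i + (4)*z^2*zb*t*w*wb*a^3*r*i^2 + (4)*z^2*zb*t*tb*w*a^2*ab*i + (4)*z^2*zb*t*tb*w*wb*a^2*ab*r*i^2 + (2)*z^2*zb^2*a*ab + (2)*z^2*zb^2*wb*a^2*ab^2 + (8)*z^2*zb^2*wb*a^2*ab^2*i^2 + (2)*z^2*zb^2*w*a^2*ab^2 + (8)*z^2*zb^2*w*a^2*ab^2*i^2 + (2)*z^2*zb^2*w*wb*a*ab*r^2*i^2 + (2)*z^2*zb^2*tb*wb*ab^2*r*i + (-2)*z^2*zb^2*tb*wb*a*ab^3 + (-8)*z^2*zb^2*tb*wb*a*ab^3*i^2 + (-2)*z^2*zb^2*tb*w*a*ab^3 + (-2)*z^2*zb^2*tb*w*wb*ab^2*r^2*i^2 + (-2)*z^2*zb^2*t*wb*a^3*ab + (-2)*z^2*zb^2*t*w*a^2*r*i + (-2)*z^2*zb^2*t*w*a^3*ab + (-8)*z^2*zb^2*t*w*a^3*ab*i^2 + (-2)*z^2*zb^2*t*w*wb*a^2*r^2*i^2 + (2)*z^2*zb^2*t*tb*wb*a^2*ab^2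 + (2)*z^2*zb^2*t*tb*w*a^2*ab^2 + (-4)*z^2*zb^3*a*ab^2*i + (4)*z^2*zb^3*t*w*a^2*ab*r*i^2 + (1)*z^2*zb^4*ab^2*r*i + (-1)*z^2*zb^4*a*ab^3 + (-4)*z^2*zb^4*a*ab^3*i^2 + (-1)*z^2*zb^4*w*ab^2*r^2*i^2 + (1)*z^2*zb^4*t*a^2*ab^2 + (-4)*z^3*wb*a^3*i + (-2)*z^3*wb^2*a^3*r*i^2 + (4)*z^3*tb*wb*a^2*ab*i + (2)*z^3*tb^2*wb^2*a*ab^2*r*i^2 + (8)*z^3*zb*wb*a^3*ab*i^2 + (-8)*z^3*zb*tb*wb*a^2*ab^2*i^2 + (4)*z^3*zb^2*a^2*ab*i + (4)*z^3*zb^2*tb*wb*a*ab^2*r*i^2 + (-8)*z^3*zb^3*a^2*ab^2*i^2 + (2)*z^3*zb^4*a*ab^2*r*i^2 + (1)*z^4*wb*a^4 + (-1)*z^4*tb*a^2 + (-2)*z^4*tb*wb*a^2*r*i + (-2)*z^4*tb*wb*a^3*ab + (-1)*z^4*tb*wb^2*a^2*r^2*i^2 + (1)*z^4*tb^2*wb*a^2*ab^2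 + (2)*z^4*zb*a^3*i + (2)*z^4*zb*wb*a^3*r*i^2 + (2)*z^4*zb*tb*a^2*ab*i + (2)*z^4*zb*tb*wb*a^2*ab*r*i^2 + (-1)*z^4*zb^2*a^2*r*i + (-1)*z^4*zb^2*a^3*ab + (-4)*z^4*zb^2*a^3*ab*i^2 + (-1)*z^4*zb^2*wb*a^2*r^2*i^2 + (1)*z^4*zb^2*tb*a^2*ab^2 + (2)*z^4*zb^3*a^2*ab*r*i^2) * hI


lemma conj_GMm (Z T : ℂ) : conj (GMm Z T) = GMm (conj Z) (conj T) := by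
  simp only [GMm, map_div₀, map_add, map_sub, map_mul, map_pow, map_one, map_ofNat,
    Complex.conj_conj]
  try ring

lemma one_sub_mul_conj_ne (ζ : ℂ) (h : ‖ζ‖ < 1) : (1 : ℂ) - ζ * conj ζ ≠ 0 := by
  rw [Complex.mul_conj]
  intro hh
  have h1 : Complex.normSq ζ = 1 := by
    have : ((1 : ℝ) : ℂ) = ((Complex.normSq ζ : ℝ) : ℂ) := by
      push_cast; linear_combination hh
    exact_mod_cast this.symm
  have h2 : Complex.normSq ζ < 1 := by
    rw [Complex.normSq_eq_norm_sq]
    nlinarith [norm_nonneg ζ]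
  linarith

set_option maxHeartbeats 2000000 in
lemma final_calc (lam lb w wb D Db NZ NZb NT NTb : ℂ)
    (hlam : lam ≠ 0) (hlb : lb ≠ 0) (hD : D ≠ 0) (hDb : Db ≠ 0)
    (hE : D * Db - NT * NTb ≠ 0)
    (hkey : (w * Db + wb * D) * (D * Db - NT * NTb)
      = 2 * (D * Db * NZ * NZb + 1 / 2 * D * NZb ^ 2 * NT + 1 / 2 * Db * NZ ^ 2 * NTb)) :
    lam * lb * w / D + lb * lam * wb / Db =
      (lam * NZ / D * (lb * NZb / Db) + 1 / 2 * (lb * NZb / Db) ^ 2 * (lam / lb * NT / D) +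
          1 / 2 * (lam * NZ / D) ^ 2 * (lb / lam * NTb / Db)) /
        (1 - lam / lb * NT / D * (lb / lam * NTb / Db)) +
      (lb * NZb / Db * (lam * NZ / D) + 1 / 2 * (lam * NZ / D) ^ 2 * (lb / lam * NTb / Db) +
          1 / 2 * (lb * NZb / Db) ^ 2 * (lam / lb * NT / D)) /
        (1 - lb / lam * NTb / Db * (lam / lb * NT / D)) := by
  have e2 : (1:ℂ) - lam / lb * NT / D * (lb / lam * NTb / Db) = (D*Db - NT*NTb)/(D*Db) := by
    field_simp
  have e2' : (1:ℂ) - lb / lam * NTb / Db * (lam / lb * NT / D) = (D*Db - NT*NTb)/(D*Db) := by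
    field_simp
  rw [e2, e2', div_div_eq_mul_div, div_div_eq_mul_div, ← add_div,
    div_add_div _ _ hD hDb, div_eq_div_iff (mul_ne_zero hD hDb) hE]
  field_simp [hlam, hlb, hD, hDb, hE]
  have hQ : D * Db * (2 * Db ^ 2 * (lb * D)) * (2 * D ^ 2 * (lam * Db)) ≠ 0 := by
    simp [hD, hDb, hlam, hlb, pow_eq_zero_iff, mul_eq_zero]
  have hQ' : Db * D * (2 * D ^ 2 * (lam * Db)) * (2 * Db ^ 2 * (lb * D)) ≠ 0 := by
    simp [hD, hDb, hlam, hlb, pow_eq_zero_iff, mul_eq_zero]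
  linear_combination 2 * hkey

set_option maxHeartbeats 4000000 in
/-- The 5-real-parameter family of maps `(z,ζ,w) ↦ (z',ζ',w')` fixes the origin of `ℂ³` and
preserves the Gaussier–Merker hypersurface `{Re w = m(z,ζ)}` where defined. -/
theorem gaussierMerker_automorphisms (lam α : ℂ) (ρ : ℝ) (hlam : lam ≠ 0) :
    (mapZ lam α ρ 0 0 0 = 0 ∧ mapZeta lam α ρ 0 0 0 = 0 ∧ mapW lam α ρ 0 0 0 = 0) ∧
    ∀ z ζ w : ℂ, ‖ζ‖ < 1 → Δ α ρ z ζ w ≠ 0 →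
      ‖mapZeta lam α ρ z ζ w‖ < 1 →
      w.re = (GMm z ζ).re →
      (mapW lam α ρ z ζ w).re = (GMm (mapZ lam α ρ z ζ w) (mapZeta lam α ρ z ζ w)).re := by
  have hlb : conj lam ≠ 0 := by
    rw [starRingEnd_apply]; exact star_ne_zero.mpr hlam
  constructor
  · refine ⟨?_, ?_, ?_⟩ <;> simp [mapZ, mapZeta, mapW, Δ]
  · intro z ζ w hζ hD hζ' hw
    -- real constraint on (z, ζ, w)
    have hden : (1 : ℂ) - ζ * conj ζ ≠ 0 := one_sub_mul_conj_ne ζ hζ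
    have hreal : conj (GMm z ζ) = GMm z ζ := by
      rw [conj_GMm]; simp only [GMm, Complex.conj_conj]; ring_nf
    have hm : GMm z ζ = ((GMm z ζ).re : ℂ) := (Complex.conj_eq_iff_re.mp hreal).symm
    have hC : (w + conj w) * (1 - ζ * conj ζ)
        = 2 * (z * conj z) + (conj z) ^ 2 * ζ + z ^ 2 * conj ζ := by
      have h1 : w + conj w = 2 * GMm z ζ := by
        rw [Complex.add_conj, hw, hm]; push_cast
        simp
      rw [h1, GMm, mul_comm (2 : ℂ) _, div_mul_eq_mul_div, div_mul_eq_mul_div,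
        div_eq_iff hden]
      ring
    -- key polynomial identity
    have hkey := GM_key z (conj z) ζ (conj ζ) w (conj w) α (conj α) (ρ : ℂ) Complex.I
      Complex.I_sq hC
    -- formulas for the map and its conjugates
    have hz' : mapZ lam α ρ z ζ w
        = lam * (z + Complex.I*α*z^2 + (Complex.I*α*ζ - Complex.I*conj α)*w) / Δ α ρ z ζ w := rfl
    have ht' : mapZeta lam α ρ z ζ w
        = (lam / conj lam) * (ζ + 2*Complex.I*conj α*z - (α*conj α + Complex.I*(ρ:ℂ))*z^2
            + ((conj α)^2 - Complex.I*(ρ:ℂ)*ζ - α*conj α*ζ)*w) / Δ α ρ z ζ w := rfl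
    have hw' : mapW lam α ρ z ζ w = lam * conj lam * w / Δ α ρ z ζ w := rfl
    have hcD : conj (Δ α ρ z ζ w)
        = 1 - 2*Complex.I*conj α*conj z - (conj α)^2*(conj z)^2
          - ((conj α)^2*conj ζ - α*conj α - Complex.I*(ρ:ℂ))*conj w := by
      simp only [Δ, map_add, map_sub, map_mul, map_pow, map_one, map_ofNat,
        Complex.conj_I, Complex.conj_conj, Complex.conj_ofReal]
      ring
    have hcNz : conj (z + Complex.I*α*z^2 + (Complex.I*α*ζ - Complex.I*conj α)*w)
        = conj z - Complex.I*conj α*(conj z)^2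
          + (-(Complex.I*conj α*conj ζ) + Complex.I*α)*conj w := by
      simp only [map_add, map_sub, map_mul, map_pow, Complex.conj_I, Complex.conj_conj]
      ring
    have hcNt : conj (ζ + 2*Complex.I*conj α*z - (α*conj α + Complex.I*(ρ:ℂ))*z^2
            + ((conj α)^2 - Complex.I*(ρ:ℂ)*ζ - α*conj α*ζ)*w)
        = conj ζ - 2*Complex.I*α*conj z - (α*conj α - Complex.I*(ρ:ℂ))*(conj z)^2
          + (α^2 + Complex.I*(ρ:ℂ)*conj ζ - α*conj α*conj ζ)*conj w := by
      simp only [map_add, map_sub, map_mul, map_pow, map_ofNat, Complex.conj_I,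
        Complex.conj_conj, Complex.conj_ofReal]
      ring
    have hDb0 : (1 - 2*Complex.I*conj α*conj z - (conj α)^2*(conj z)^2
          - ((conj α)^2*conj ζ - α*conj α - Complex.I*(ρ:ℂ))*conj w) ≠ 0 := by
      rw [← hcD, starRingEnd_apply]; exact star_ne_zero.mpr hD
    -- conjugates of the mapped points
    have hz'c : conj (mapZ lam α ρ z ζ w)
        = conj lam * (conj z - Complex.I*conj α*(conj z)^2
            + (-(Complex.I*conj α*conj ζ) + Complex.I*α)*conj w)
          / (1 - 2*Complex.I*conj α*conj z - (conj α)^2*(conj z)^2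
            - ((conj α)^2*conj ζ - α*conj α - Complex.I*(ρ:ℂ))*conj w) := by
      rw [hz', map_div₀, map_mul, hcNz, hcD]
    have ht'c : conj (mapZeta lam α ρ z ζ w)
        = (conj lam / lam) * (conj ζ - 2*Complex.I*α*conj z
            - (α*conj α - Complex.I*(ρ:ℂ))*(conj z)^2
            + (α^2 + Complex.I*(ρ:ℂ)*conj ζ - α*conj α*conj ζ)*conj w)
          / (1 - 2*Complex.I*conj α*conj z - (conj α)^2*(conj z)^2
            - ((conj α)^2*conj ζ - α*conj α - Complex.I*(ρ:ℂ))*conj w) := by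
      rw [ht', map_div₀, map_mul, map_div₀, hcNt, hcD, Complex.conj_conj]
    have hw'c : conj (mapW lam α ρ z ζ w)
        = conj lam * lam * conj w
          / (1 - 2*Complex.I*conj α*conj z - (conj α)^2*(conj z)^2
            - ((conj α)^2*conj ζ - α*conj α - Complex.I*(ρ:ℂ))*conj w) := by
      rw [hw', map_div₀, map_mul, map_mul, hcD, Complex.conj_conj]
    -- nonvanishing of 1 - ζ'·conj ζ'
    have hden' : (1 : ℂ) - mapZeta lam α ρ z ζ w * conj (mapZeta lam α ρ z ζ w) ≠ 0 :=
      one_sub_mul_conj_ne _ hζ'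
    -- reduce to a sum-of-conjugates identity
    suffices hsum : mapW lam α ρ z ζ w + conj (mapW lam α ρ z ζ w)
        = GMm (mapZ lam α ρ z ζ w) (mapZeta lam α ρ z ζ w)
          + conj (GMm (mapZ lam α ρ z ζ w) (mapZeta lam α ρ z ζ w)) by
      rw [Complex.add_conj, Complex.add_conj] at hsum
      have h2 : 2 * (mapW lam α ρ z ζ w).re
          = 2 * (GMm (mapZ lam α ρ z ζ w) (mapZeta lam α ρ z ζ w)).re := by
        exact_mod_cast hsum
      linarith
    rw [conj_GMm]
    simp only [GMm, Complex.conj_conj]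
    rw [hw'c, hz'c, ht'c, hw', hz', ht']
    rw [ht'c, ht'] at hden'
    have hDexp : Δ α ρ z ζ w
        = 1 + 2*Complex.I*α*z - α^2*z^2 - (α^2*ζ - α*conj α + Complex.I*(ρ:ℂ))*w := rfl
    rw [← hDexp] at hkey
    set lb := conj lam with hlbd
    set wb := conj w with hwbd
    set D := Δ α ρ z ζ w with hDd
    set Db := (1 - 2*Complex.I*conj α*conj z - (conj α)^2*(conj z)^2
          - ((conj α)^2*conj ζ - α*conj α - Complex.I*(ρ:ℂ))*wb) with hDbd
    set NZ := (z + Complex.I*α*z^2 + (Complex.I*α*ζ - Complex.I*conj α)*w) with hNZd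
    set NZb := (conj z - Complex.I*conj α*(conj z)^2
            + (-(Complex.I*conj α*conj ζ) + Complex.I*α)*wb) with hNZbd
    set NT := (ζ + 2*Complex.I*conj α*z - (α*conj α + Complex.I*(ρ:ℂ))*z^2
            + ((conj α)^2 - Complex.I*(ρ:ℂ)*ζ - α*conj α*ζ)*w) with hNTd
    set NTb := (conj ζ - 2*Complex.I*α*conj z - (α*conj α - Complex.I*(ρ:ℂ))*(conj z)^2
          + (α^2 + Complex.I*(ρ:ℂ)*conj ζ - α*conj α*conj ζ)*wb) with hNTbd
    have hE : D * Db - NT * NTb ≠ 0 := by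
      intro h
      apply hden'
      have : (1:ℂ) - lam / lb * NT / D * (lb / lam * NTb / Db) = (D*Db - NT*NTb)/(D*Db) := by
        field_simp
      rw [this, h, zero_div]
    exact final_calc lam lb w wb D Db NZ NZb NT NTb hlam hlb hD hDb0 hE hkey
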